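/- A signed multiset μ : α × Bool →₀ ℕ belongs to Func if and only if either μ = Finsupp.single (a, false) 1 for some a : α, or there exist a b : α with μ (a, false) > 0 and μ (b, true) > 0. (In a free compact closed category, the characterization of functional types is the same as in the pivotal case: a type is functional iff it is a basic type, or has at least one occurrence with exponent +1 and at least one with exponent −1.) -/

import Mathlib

/-- The dual of a signed multiset: negate every sign, `swap μ (a, b) = μ (a, !b)`. -/
def swapDual {α : Type*} (μ : α × Bool →₀ ℕ) : α × Bool →₀ ℕ :=
  Finsupp.equivMapDomain
    (Equiv.prodCongr (Equiv.refl α) ⟨Bool.not, Bool.not, Bool.not_not, Bool.not_not⟩) μ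

/-- Functional types in the free compact closed category on `α`, modelled as signed
multisets `α × Bool →₀ ℕ`: the smallest set containing `Finsupp.single (a, false) 1`
for every `a : α`, closed under `(u, v) ↦ u + swapDual v`. -/
inductive Func {α : Type*} : (α × Bool →₀ ℕ) → Prop
  | base (a : α) : Func (Finsupp.single (a, false) 1)
  | comb {u v : α × Bool →₀ ℕ} : Func u → Func v → Func (u + swapDual v)

lemma swapDual_apply {α : Type*} (μ : α × Bool →₀ ℕ) (a : α) (b : Bool) :
    swapDual μ (a, b) = μ (a, !b) := rfl

lemma swapDual_add {α : Type*} (u v : α × Bool →₀ ℕ) :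
    swapDual (u + v) = swapDual u + swapDual v := by
  ext ⟨a, b⟩; simp [swapDual_apply]

lemma swapDual_swapDual {α : Type*} (μ : α × Bool →₀ ℕ) :
    swapDual (swapDual μ) = μ := by
  ext ⟨a, b⟩; simp [swapDual_apply]

lemma swapDual_single {α : Type*} (x : α) (c : Bool) (n : ℕ) :
    swapDual (Finsupp.single (x, c) n) = Finsupp.single (x, !c) n := by
  classical
  ext ⟨a, b⟩
  rw [swapDual_apply, Finsupp.single_apply, Finsupp.single_apply]
  simp only [Prod.mk.injEq]
  cases b <;> cases c <;> simp

lemma Func.addTrue {α : Type*} {w : α × Bool →₀ ℕ} (h : Func w) (x : α) :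
    Func (w + Finsupp.single (x, true) 1) := by
  have := Func.comb h (Func.base x)
  rwa [swapDual_single] at this

lemma Func.addTrueK {α : Type*} {w : α × Bool →₀ ℕ} (h : Func w) (x : α) (k : ℕ) :
    Func (w + Finsupp.single (x, true) k) := by
  induction k with
  | zero => simpa using h
  | succ k ih =>
      have : w + Finsupp.single (x, true) (k + 1)
          = (w + Finsupp.single (x, true) k) + Finsupp.single (x, true) 1 := by
        rw [Finsupp.single_add, add_assoc]
      rw [this]; exact ih.addTrue x

lemma oneFalse {α : Type*} (a : α) (T : α × Bool →₀ ℕ) (hT : ∀ y, T (y, false) = 0) :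
    Func (Finsupp.single (a, false) 1 + T) := by
  induction T using Finsupp.induction with
  | zero => simpa using Func.base a
  | single_add p k S hp hk ih =>
      obtain ⟨x, b⟩ := p
      have hS : ∀ y, S (y, false) = 0 := by
        intro y
        have := hT y
        simp only [Finsupp.add_apply] at this
        omega
      cases b with
      | false =>
          have := hT x
          simp [Finsupp.add_apply, Finsupp.single_apply, hS x] at this
          exact absurd this hk
      | true =>
          have : Finsupp.single (a, false) 1 + (Finsupp.single (x, true) k + S)
              = (Finsupp.single (a, false) 1 + S) + Finsupp.single (x, true) k := by
            abel
          rw [this]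
          exact (ih hS).addTrueK x k

lemma Func.exists_false_pos {α : Type*} {μ : α × Bool →₀ ℕ} (h : Func μ) :
    ∃ a, 0 < μ (a, false) := by
  induction h with
  | base a => exact ⟨a, by simp⟩
  | comb hu hv ihu ihv =>
      obtain ⟨a, ha⟩ := ihu
      exact ⟨a, by simp only [Finsupp.add_apply]; omega⟩

/-- Characterization of functional types in a free compact closed category: a signed
multiset is functional iff it is a single generator, or it has at least one occurrence
with exponent `+1` and at least one with exponent `−1`. -/
theorem func_iff {α : Type*} (μ : α × Bool →₀ ℕ) :
    Func μ ↔ (∃ a : α, μ = Finsupp.single (a, false) 1) ∨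
      (∃ a b : α, 0 < μ (a, false) ∧ 0 < μ (b, true)) := by
  constructor
  · intro h
    induction h with
    | base a => exact Or.inl ⟨a, rfl⟩
    | comb hu hv ihu ihv =>
        obtain ⟨a, ha⟩ := hu.exists_false_pos
        obtain ⟨b, hb⟩ := hv.exists_false_pos
        refine Or.inr ⟨a, b, ?_, ?_⟩
        · simp only [Finsupp.add_apply]; omega
        · simp only [Finsupp.add_apply, swapDual_apply]
          simpa using Nat.lt_of_lt_of_le hb (Nat.le_add_left _ _)
  · rintro (⟨a, rfl⟩ | ⟨a, c, ha, hc⟩)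
    · exact Func.base a
    · classical
      set ρ : α × Bool →₀ ℕ :=
        μ - (Finsupp.single (a, false) 1 + Finsupp.single (c, true) 1) with hρ
      set ρT := ρ.filter (fun p => p.2 = true) with hρT
      set ρF := ρ.filter (fun p => p.2 = false) with hρF
      have hμ : μ = (Finsupp.single (a, false) 1 + ρT)
          + swapDual (Finsupp.single (c, false) 1 + swapDual ρF) := by
        rw [swapDual_add, swapDual_single, swapDual_swapDual]
        ext ⟨y, b⟩
        simp only [Finsupp.add_apply, hρT, hρF, Finsupp.filter_apply, hρ,
          Finsupp.tsub_apply, Finsupp.single_apply, Prod.mk.injEq, Bool.not_false]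
        have h1 : 1 ≤ μ (a, false) := ha
        have h2 : 1 ≤ μ (c, true) := hc
        cases b <;> by_cases hya : y = a <;> by_cases hyc : y = c <;>
          subst_eqs <;> simp_all <;> (try split_ifs) <;> first | omega | simp_all
      rw [hμ]
      refine Func.comb (oneFalse a ρT ?_) (oneFalse c (swapDual ρF) ?_)
      · intro y; simp [hρT, Finsupp.filter_apply]
      · intro y; simp [swapDual_apply, hρF, Finsupp.filter_apply]
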